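/- Let f : ℝ → ℝ be three times continuously differentiable and x : ℝ → ℝ be twice continuously differentiable, with |x'(s)| ≤ v_max and |x''(s)| ≤ a_max for all s. Let f_x, Z, C > 0 be constants and set μ(s) = −(f_x/Z)·x(s). Let K ⊂ ℤ² be a finite set of N_u·N_v pixels such that Σ_{(u,v)∈K} u = 0 and |u| ≤ N_u/2 for every (u,v) ∈ K. Suppose |f'(w)| ≤ F₁, |f''(w)| ≤ F₂ and |f'''(w)| ≤ F₃ for all w in an interval containing u + μ(s) for every (u,v) ∈ K and every s ∈ [t, t+Δt]. Define the net event count N_net = (1/C)·Σ_{(u,v)∈K} [f(u + μ(t+Δt)) − f(u + μ(t))] and the net event rate estimator M = −(N_u N_v f_x/(C Z))·x'(t)·f'(μ(t)). Then for every Δt > 0, |N_net − M·Δt| ≤ L_time·Δt² + L_space·Δt, where L_time = (N_u N_v/(2C))·[F₂·(f_x·v_max/Z)² + F₁·(f_x·a_max/Z)] and L_space = (N_u N_v/C)·(N_u²/8)·(f_x·v_max/Z)·F₃. -/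

import Mathlib

open Real Finset

lemma mvt_abs_aux (φ φ' : ℝ → ℝ) (a b B : ℝ) (hab : a ≤ b)
    (hd : ∀ s, HasDerivAt φ (φ' s) s)
    (hb : ∀ s ∈ Set.Icc a b, |φ' s| ≤ B) :
    |φ b - φ a| ≤ B * (b - a) := by
  have := Convex.norm_image_sub_le_of_norm_hasDerivWithin_le
    (f := φ) (f' := φ') (s := Set.Icc a b)
    (fun s hs => (hd s).hasDerivWithinAt) hb (convex_Icc a b)
    (Set.left_mem_Icc.mpr hab) (Set.right_mem_Icc.mpr hab)
  simpa [Real.norm_eq_abs, abs_of_nonneg (sub_nonneg.mpr hab)] using this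

lemma taylor_quad_aux (g g' g'' : ℝ → ℝ) (a b B : ℝ) (hab : a ≤ b)
    (hd1 : ∀ s, HasDerivAt g (g' s) s) (hd2 : ∀ s, HasDerivAt g' (g'' s) s)
    (hB : ∀ s ∈ Set.Icc a b, |g'' s| ≤ B) :
    |g b - g a - g' a * (b - a)| ≤ B / 2 * (b - a) ^ 2 := by
  have key := image_norm_le_of_norm_deriv_right_le_deriv_boundary
    (f := fun s => g s - g a - g' a * (s - a)) (f' := fun s => g' s - g' a)
    (a := a) (b := b)
    (B := fun s => B / 2 * (s - a) ^ 2) (B' := fun s => B * (s - a))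
    ?_ ?_ ?_ ?_ ?_ (Set.right_mem_Icc.mpr hab)
  · simpa [Real.norm_eq_abs] using key
  · have hgc : Continuous g := continuous_iff_continuousAt.mpr fun s => (hd1 s).continuousAt
    exact ((hgc.sub continuous_const).sub
      (continuous_const.mul (continuous_id.sub continuous_const))).continuousOn
  · intro s _
    have h2 : HasDerivAt (fun s => g' a * (s - a)) (g' a) s := by
      simpa using ((hasDerivAt_id s).sub_const a).const_mul (g' a)
    exact (((hd1 s).sub_const (g a)).sub h2).hasDerivWithinAt
  · simp
  · intro s
    have := (((hasDerivAt_id s).sub_const a).pow 2).const_mul (B / 2)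
    refine this.congr_deriv ?_
    simp only [id_eq]
    push_cast
    ring
  · intro s hs
    have h1 : |g' s - g' a| ≤ B * (s - a) :=
      mvt_abs_aux g' g'' a s B hs.1 hd2 (fun r hr => hB r ⟨hr.1, hr.2.trans hs.2.le⟩)
    simpa [Real.norm_eq_abs] using h1

set_option maxHeartbeats 1000000 in
/-- **Theorem 1 (Net event count bound).**
An event camera observing a scene with horizontal logarithmic intensity profile `f`,
translating with position `x t` at distance `Z`, focal length `f_x`, contrast threshold `C`,
over a symmetric pixel kernel `K` of `N_u * N_v` pixels, produces a net event count
`N_net` satisfying `|N_net - M * Δt| ≤ L_time * Δt ^ 2 + L_space * Δt`. -/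
theorem net_event_count_bound
    (f x : ℝ → ℝ) (hf : ContDiff ℝ 3 f) (hx : ContDiff ℝ 2 x)
    (v_max a_max : ℝ)
    (hv : ∀ s : ℝ, |deriv x s| ≤ v_max)
    (ha : ∀ s : ℝ, |deriv (deriv x) s| ≤ a_max)
    (f_x Z C : ℝ) (hfx : 0 < f_x) (hZ : 0 < Z) (hC : 0 < C)
    (μ : ℝ → ℝ) (hμ : ∀ s : ℝ, μ s = -(f_x / Z) * x s)
    (N_u N_v : ℕ) (K : Finset (ℤ × ℤ)) (hcard : K.card = N_u * N_v)
    (hsum : ∑ p ∈ K, (p.1 : ℝ) = 0)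
    (hpix : ∀ p ∈ K, |(p.1 : ℝ)| ≤ (N_u : ℝ) / 2)
    (t Δt : ℝ) (hΔt : 0 < Δt)
    (I : Set ℝ) (hI : Convex ℝ I)
    (hmem : ∀ p ∈ K, ∀ s ∈ Set.Icc t (t + Δt), ((p.1 : ℝ) + μ s) ∈ I)
    (F₁ F₂ F₃ : ℝ)
    (hF₁ : ∀ w ∈ I, |deriv f w| ≤ F₁)
    (hF₂ : ∀ w ∈ I, |deriv (deriv f) w| ≤ F₂)
    (hF₃ : ∀ w ∈ I, |deriv (deriv (deriv f)) w| ≤ F₃)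
    (N_net M L_time L_space : ℝ)
    (hN : N_net = (1 / C) * ∑ p ∈ K, (f ((p.1 : ℝ) + μ (t + Δt)) - f ((p.1 : ℝ) + μ t)))
    (hM : M = -((N_u : ℝ) * (N_v : ℝ) * f_x / (C * Z)) * deriv x t * deriv f (μ t))
    (hLtime : L_time = ((N_u : ℝ) * (N_v : ℝ) / (2 * C)) *
      (F₂ * (f_x * v_max / Z) ^ 2 + F₁ * (f_x * a_max / Z)))
    (hLspace : L_space = ((N_u : ℝ) * (N_v : ℝ) / C) * ((N_u : ℝ) ^ 2 / 8) *
      (f_x * v_max / Z) * F₃) :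
    |N_net - M * Δt| ≤ L_time * Δt ^ 2 + L_space * Δt := by
  rcases K.eq_empty_or_nonempty with hKe | hne
  · -- degenerate case: no pixels
    subst hKe
    simp only [Finset.card_empty] at hcard
    have h0 : (N_u : ℝ) * (N_v : ℝ) = 0 := by
      have := hcard.symm
      rcases Nat.mul_eq_zero.mp this with h | h <;> simp [h]
    rw [hN, hM, hLtime, hLspace]
    simp [h0]
  -- main case
  set c : ℝ := f_x / Z with hc_def
  have hc : 0 < c := div_pos hfx hZ
  have hμe : μ = fun s => -c * x s := funext hμ
  -- differentiability facts for x
  have hx2 : ContDiff ℝ (1 + 1) x := by rw [show ((1:WithTop ℕ∞) + 1) = 2 from rfl]; exact hx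
  have hx1 : ContDiff ℝ 1 (deriv x) := (contDiff_succ_iff_deriv.mp hx2).2.2
  have hdx : ∀ s, HasDerivAt x (deriv x s) s :=
    fun s => ((contDiff_succ_iff_deriv.mp hx2).1 s).hasDerivAt
  have hdx' : ∀ s, HasDerivAt (deriv x) (deriv (deriv x) s) s :=
    fun s => ((hx1.differentiable one_ne_zero) s).hasDerivAt
  -- differentiability facts for f
  have hf3 : ContDiff ℝ (2 + 1) f := by rw [show ((2:WithTop ℕ∞) + 1) = 3 from rfl]; exact hf
  have hf2 : ContDiff ℝ 2 (deriv f) := (contDiff_succ_iff_deriv.mp hf3).2.2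
  have hf2' : ContDiff ℝ (1 + 1) (deriv f) := by
    rw [show ((1:WithTop ℕ∞) + 1) = 2 from rfl]; exact hf2
  have hf1 : ContDiff ℝ 1 (deriv (deriv f)) := (contDiff_succ_iff_deriv.mp hf2').2.2
  have hdf : ∀ w, HasDerivAt f (deriv f w) w :=
    fun w => ((contDiff_succ_iff_deriv.mp hf3).1 w).hasDerivAt
  have hdf1 : ∀ w, HasDerivAt (deriv f) (deriv (deriv f) w) w :=
    fun w => ((contDiff_succ_iff_deriv.mp hf2').1 w).hasDerivAt
  have hdf2 : ∀ w, HasDerivAt (deriv (deriv f)) (deriv (deriv (deriv f)) w) w :=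
    fun w => ((hf1.differentiable one_ne_zero) w).hasDerivAt
  -- derivative of μ
  have hdμ : ∀ s, HasDerivAt μ (-c * deriv x s) s := by
    rw [hμe]; exact fun s => (hdx s).const_mul (-c)
  -- basic sign facts
  have hv0 : 0 ≤ v_max := (abs_nonneg _).trans (hv t)
  have ha0 : 0 ≤ a_max := (abs_nonneg _).trans (ha t)
  have htmem : t ∈ Set.Icc t (t + Δt) := ⟨le_refl t, by linarith⟩
  -- μ t ∈ I (centroid of the kernel)
  have hcard_pos : 0 < (K.card : ℝ) := by exact_mod_cast Finset.card_pos.mpr hne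
  have hμtI : μ t ∈ I := by
    have hmem' : ∀ p ∈ K, ((p.1 : ℝ) + μ t) ∈ I := fun p hp => hmem p hp t htmem
    have := hI.sum_mem (t := K) (w := fun _ => (K.card : ℝ)⁻¹)
      (z := fun p => (p.1 : ℝ) + μ t)
      (fun p _ => by positivity)
      (by rw [Finset.sum_const, nsmul_eq_mul, mul_inv_cancel₀ (ne_of_gt hcard_pos)])
      hmem'
    have heq : ∑ p ∈ K, (K.card : ℝ)⁻¹ • ((p.1 : ℝ) + μ t) = μ t := by
      simp only [smul_eq_mul]
      rw [← Finset.mul_sum, Finset.sum_add_distrib, hsum, Finset.sum_const, nsmul_eq_mul,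
        zero_add, ← mul_assoc, inv_mul_cancel₀ (ne_of_gt hcard_pos), one_mul]
    rwa [heq] at this
  have hF₃0 : 0 ≤ F₃ := (abs_nonneg _).trans (hF₃ _ hμtI)
  -- bounds
  set B2 : ℝ := F₂ * (c * v_max) ^ 2 + F₁ * (c * a_max) with hB2_def
  -- time Taylor remainder, per pixel
  have hE : ∀ p ∈ K,
      |f ((p.1 : ℝ) + μ (t + Δt)) - f ((p.1 : ℝ) + μ t)
        - deriv f ((p.1 : ℝ) + μ t) * (-c * deriv x t) * Δt| ≤ B2 / 2 * Δt ^ 2 := by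
    intro p hp
    set u : ℝ := (p.1 : ℝ) with hu_def
    have hg1 : ∀ s, HasDerivAt (fun s => f (u + μ s))
        (deriv f (u + μ s) * (-c * deriv x s)) s :=
      fun s => (hdf (u + μ s)).comp s ((hdμ s).const_add u)
    have hg2 : ∀ s, HasDerivAt (fun s => deriv f (u + μ s) * (-c * deriv x s))
        (deriv (deriv f) (u + μ s) * (-c * deriv x s) * (-c * deriv x s)
          + deriv f (u + μ s) * (-c * deriv (deriv x) s)) s := by
      intro s
      exact ((hdf1 (u + μ s)).comp s ((hdμ s).const_add u)).mul ((hdx' s).const_mul (-c))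
    have hbnd : ∀ s ∈ Set.Icc t (t + Δt),
        |deriv (deriv f) (u + μ s) * (-c * deriv x s) * (-c * deriv x s)
          + deriv f (u + μ s) * (-c * deriv (deriv x) s)| ≤ B2 := by
      intro s hs
      have hwI : (u + μ s) ∈ I := hmem p hp s hs
      have h1 : |(-c * deriv x s)| ≤ c * v_max := by
        rw [abs_mul, abs_neg, abs_of_pos hc]
        exact mul_le_mul_of_nonneg_left (hv s) hc.le
      have h2 : |(-c * deriv (deriv x) s)| ≤ c * a_max := by
        rw [abs_mul, abs_neg, abs_of_pos hc]
        exact mul_le_mul_of_nonneg_left (ha s) hc.le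
      have hA := hF₂ _ hwI
      have hB := hF₁ _ hwI
      set A := deriv (deriv f) (u + μ s) with hA_def
      set D := deriv f (u + μ s) with hD_def
      set b := -c * deriv x s with hb_def
      set e := -c * deriv (deriv x) s with he_def
      calc |A * b * b + D * e|
          ≤ |A * b * b| + |D * e| := abs_add_le _ _
        _ = |A| * |b| * |b| + |D| * |e| := by
            rw [abs_mul (A * b) b, abs_mul A b, abs_mul D e]
        _ ≤ F₂ * (c * v_max) * (c * v_max) + F₁ * (c * a_max) := by
            have n1 := abs_nonneg A
            have n2 := abs_nonneg D
            have n3 := abs_nonneg b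
            have n4 := abs_nonneg e
            have step1 : |A| * |b| ≤ F₂ * (c * v_max) := mul_le_mul hA h1 n3 (n1.trans hA)
            have step2 : |A| * |b| * |b| ≤ F₂ * (c * v_max) * (c * v_max) :=
              mul_le_mul step1 h1 n3 (mul_nonneg (n1.trans hA) (n3.trans h1))
            have step3 : |D| * |e| ≤ F₁ * (c * a_max) := mul_le_mul hB h2 n4 (n2.trans hB)
            linarith
        _ = F₂ * (c * v_max) ^ 2 + F₁ * (c * a_max) := by ring
    have := taylor_quad_aux (fun s => f (u + μ s))
      (fun s => deriv f (u + μ s) * (-c * deriv x s))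
      (fun s => deriv (deriv f) (u + μ s) * (-c * deriv x s) * (-c * deriv x s)
          + deriv f (u + μ s) * (-c * deriv (deriv x) s))
      t (t + Δt) B2 (by linarith) hg1 hg2 hbnd
    simpa [show t + Δt - t = Δt by ring] using this
  -- spatial Taylor remainder, per pixel
  have hR : ∀ p ∈ K,
      |deriv f ((p.1 : ℝ) + μ t) - deriv f (μ t) - deriv (deriv f) (μ t) * (p.1 : ℝ)|
        ≤ F₃ * (N_u : ℝ) ^ 2 / 8 := by
    intro p hp
    set u : ℝ := (p.1 : ℝ) with hu_def
    have hψ1 : ∀ r, HasDerivAt (fun r => deriv f (u * r + μ t))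
        (deriv (deriv f) (u * r + μ t) * u) r := by
      intro r
      have hin : HasDerivAt (fun r : ℝ => u * r + μ t) u r := by
        simpa using (((hasDerivAt_id r).const_mul u).add_const (μ t))
      exact (hdf1 (u * r + μ t)).comp r hin
    have hψ2 : ∀ r, HasDerivAt (fun r => deriv (deriv f) (u * r + μ t) * u)
        (deriv (deriv (deriv f)) (u * r + μ t) * u * u) r := by
      intro r
      have hin : HasDerivAt (fun r : ℝ => u * r + μ t) u r := by
        simpa using (((hasDerivAt_id r).const_mul u).add_const (μ t))
      exact ((hdf2 (u * r + μ t)).comp r hin).mul_const u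
    have hbnd : ∀ r ∈ Set.Icc (0:ℝ) 1,
        |deriv (deriv (deriv f)) (u * r + μ t) * u * u| ≤ F₃ * u ^ 2 := by
      intro r hr
      have hwI : (u * r + μ t) ∈ I := by
        have h1 : ((1 : ℝ) - r) • (μ t) + r • (u + μ t) ∈ I :=
          hI hμtI (hmem p hp t htmem) (by linarith [hr.2]) hr.1 (by ring)
        have : ((1 : ℝ) - r) • (μ t) + r • (u + μ t) = u * r + μ t := by
          simp only [smul_eq_mul]; ring
        rwa [this] at h1
      have h3 := hF₃ _ hwI
      calc |deriv (deriv (deriv f)) (u * r + μ t) * u * u|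
          = |deriv (deriv (deriv f)) (u * r + μ t)| * (|u| * |u|) := by
            rw [abs_mul (deriv (deriv (deriv f)) (u * r + μ t) * u) u,
              abs_mul (deriv (deriv (deriv f)) (u * r + μ t)) u]; ring
        _ ≤ F₃ * (|u| * |u|) := mul_le_mul_of_nonneg_right h3 (by positivity)
        _ = F₃ * u ^ 2 := by rw [← sq_abs u]; ring
    have htay := taylor_quad_aux (fun r => deriv f (u * r + μ t))
      (fun r => deriv (deriv f) (u * r + μ t) * u)
      (fun r => deriv (deriv (deriv f)) (u * r + μ t) * u * u)
      0 1 (F₃ * u ^ 2) zero_le_one hψ1 hψ2 hbnd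
    simp only [mul_one, mul_zero, zero_add, sub_zero, one_pow] at htay
    have hu2 : u ^ 2 ≤ ((N_u : ℝ) / 2) ^ 2 := by
      rw [← sq_abs u]
      exact pow_le_pow_left₀ (abs_nonneg u) (hpix p hp) 2
    have hmul : F₃ * u ^ 2 ≤ F₃ * ((N_u : ℝ) / 2) ^ 2 :=
      mul_le_mul_of_nonneg_left hu2 hF₃0
    have hq : F₃ * ((N_u : ℝ) / 2) ^ 2 = F₃ * (N_u : ℝ) ^ 2 / 4 := by ring
    calc |deriv f (u + μ t) - deriv f (μ t) - deriv (deriv f) (μ t) * u|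
        ≤ F₃ * u ^ 2 / 2 := htay
      _ ≤ F₃ * (N_u : ℝ) ^ 2 / 8 := by linarith
  -- key algebraic identity
  have hcardR : (N_u : ℝ) * (N_v : ℝ) = (K.card : ℝ) := by rw [hcard]; push_cast; ring
  have hZ0 : Z ≠ 0 := ne_of_gt hZ
  have hC0 : C ≠ 0 := ne_of_gt hC
  set SE : ℝ := ∑ p ∈ K, (f ((p.1 : ℝ) + μ (t + Δt)) - f ((p.1 : ℝ) + μ t)
      - deriv f ((p.1 : ℝ) + μ t) * (-c * deriv x t) * Δt) with hSE_def
  set SR : ℝ := ∑ p ∈ K, (deriv f ((p.1 : ℝ) + μ t) - deriv f (μ t)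
      - deriv (deriv f) (μ t) * (p.1 : ℝ)) with hSR_def
  have key : N_net - M * Δt = (1 / C) * SE + (Δt * (-c * deriv x t) / C) * SR := by
    have expand : ∀ p ∈ K, f ((p.1 : ℝ) + μ (t + Δt)) - f ((p.1 : ℝ) + μ t)
        = (f ((p.1 : ℝ) + μ (t + Δt)) - f ((p.1 : ℝ) + μ t)
            - deriv f ((p.1 : ℝ) + μ t) * (-c * deriv x t) * Δt)
          + (-c * deriv x t) * Δt * (deriv f (μ t) + deriv (deriv f) (μ t) * (p.1 : ℝ)
            + (deriv f ((p.1 : ℝ) + μ t) - deriv f (μ t) - deriv (deriv f) (μ t) * (p.1 : ℝ))) :=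
      fun p _ => by ring
    rw [hN, hM, Finset.sum_congr rfl expand, Finset.sum_add_distrib, ← Finset.mul_sum,
      Finset.sum_add_distrib, Finset.sum_add_distrib, ← Finset.mul_sum, hsum,
      Finset.sum_const, nsmul_eq_mul, ← hcardR, ← hSE_def, ← hSR_def]
    have hZZ : Z * Z⁻¹ = 1 := mul_inv_cancel₀ hZ0
    field_simp
    linear_combination (-(f_x * deriv x t * Δt * (N_u:ℝ) * (N_v:ℝ) * deriv f (μ t)))
      * hZZ
  -- assemble the final estimate
  rw [key]
  have hSE : |SE| ≤ (K.card : ℝ) * (B2 / 2 * Δt ^ 2) := by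
    rw [hSE_def]
    refine (Finset.abs_sum_le_sum_abs _ _).trans ?_
    refine (Finset.sum_le_sum hE).trans_eq ?_
    rw [Finset.sum_const, nsmul_eq_mul]
  have hSR : |SR| ≤ (K.card : ℝ) * (F₃ * (N_u : ℝ) ^ 2 / 8) := by
    rw [hSR_def]
    refine (Finset.abs_sum_le_sum_abs _ _).trans ?_
    refine (Finset.sum_le_sum hR).trans_eq ?_
    rw [Finset.sum_const, nsmul_eq_mul]
  have hD : |Δt * (-c * deriv x t) / C| ≤ Δt * (c * v_max) / C := by
    rw [abs_div, abs_of_pos hC, abs_mul, abs_of_pos hΔt, abs_mul, abs_neg, abs_of_pos hc]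
    have h1 : c * |deriv x t| ≤ c * v_max := mul_le_mul_of_nonneg_left (hv t) hc.le
    have h2 : Δt * (c * |deriv x t|) ≤ Δt * (c * v_max) :=
      mul_le_mul_of_nonneg_left h1 hΔt.le
    exact div_le_div_of_nonneg_right h2 hC.le
  calc |(1 / C) * SE + (Δt * (-c * deriv x t) / C) * SR|
      ≤ (1 / C) * |SE| + |Δt * (-c * deriv x t) / C| * |SR| := by
        refine (abs_add_le _ _).trans ?_
        rw [abs_mul, abs_mul, abs_of_pos (by positivity : (0:ℝ) < 1 / C)]
    _ ≤ (1 / C) * ((K.card : ℝ) * (B2 / 2 * Δt ^ 2))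
        + (Δt * (c * v_max) / C) * ((K.card : ℝ) * (F₃ * (N_u : ℝ) ^ 2 / 8)) := by
        have hg1 := mul_le_mul_of_nonneg_left hSE (by positivity : (0:ℝ) ≤ 1 / C)
        have hg2 := mul_le_mul hD hSR (abs_nonneg _) (by positivity)
        linarith
    _ = L_time * Δt ^ 2 + L_space * Δt := by
        rw [hLtime, hLspace, hcardR, hB2_def, hc_def]
        field_simp
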